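/- For all α ≥ 0, η_dagger(α) ≤ (1/2)·η_L(α), i.e., the minimized asymptotic variance coefficient is less than half of Leland's. -/
import Mathlib

open Real

noncomputable def etaL (α : ℝ) : ℝ := (1/π) * α^2 + (2/π) * α + 1 - 2/π

noncomputable def etaDagger (x : ℝ) : ℝ :=
  if x ≤ -2 then (x + 2)^2 / 12
  else if x ≤ 1 then 0
  else if x < 2 then (4/3) * ((x + 2)^2 * (x - 1)) / (x^3 * (4 - x))
  else (x + 2)^2 / 12

theorem stmt_4 : ∀ α : ℝ, 0 ≤ α → etaDagger α ≤ (1/2) * etaL α := by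
  intro α hα
  have hπ : (0:ℝ) < π := Real.pi_pos
  have hπl : (3.141592 : ℝ) < π := Real.pi_gt_d6
  have hπu : π < 3.15 := Real.pi_lt_d2
  have hL : etaL α = (α^2 + 2*α + π - 2) / π := by
    unfold etaL; field_simp
  have h2 : ¬ α ≤ -2 := by linarith
  unfold etaDagger
  rw [if_neg h2, hL]
  by_cases h1 : α ≤ 1
  · rw [if_pos h1]
    have hnum : 0 ≤ α^2 + 2*α + π - 2 := by nlinarith
    have : 0 ≤ (α^2 + 2*α + π - 2) / π := div_nonneg hnum hπ.le
    linarith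
  · rw [if_neg h1]
    push_neg at h1
    have hrhs : (1/2) * ((α^2 + 2*α + π - 2) / π) = (α^2 + 2*α + π - 2) / (2*π) := by
      ring
    by_cases hlt : α < 2
    · rw [if_pos hlt]
      have hD : 0 < α^3 * (4 - α) :=
        mul_pos (pow_pos (by linarith) 3) (by linarith)
      rw [hrhs, div_le_div_iff₀ hD (by linarith)]
      have key : 0 ≤ 3*(α^3*(4-α)*(α^2+2*α-2)) - 3.15*(3*α^4-4*α^3+24*α^2-32) - 1 := by
        nlinarith [mul_nonneg (by linarith : (0:ℝ) ≤ α-1) (by linarith : (0:ℝ) ≤ 2-α),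
          sq_nonneg (α-1), sq_nonneg (α-2), sq_nonneg ((α-1)*(2-α)), sq_nonneg (α*(α-1)),
          sq_nonneg (α*(2-α)),
          mul_nonneg (mul_nonneg (by linarith : (0:ℝ) ≤ α-1) (by linarith : (0:ℝ) ≤ 2-α)) (sq_nonneg α),
          mul_nonneg (mul_nonneg (by linarith : (0:ℝ) ≤ α-1) (by linarith : (0:ℝ) ≤ 2-α)) (sq_nonneg (α-1)),
          mul_nonneg (mul_nonneg (by linarith : (0:ℝ) ≤ α-1) (by linarith : (0:ℝ) ≤ 2-α)) (sq_nonneg (α-2))]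
      have hf9 : 0 ≤ (3*α^4-4*α^3+24*α^2-32) + 9 := by nlinarith [sq_nonneg (α-1), sq_nonneg α]
      have hcomb : 0 ≤ (3.15 - π) * ((3*α^4-4*α^3+24*α^2-32) + 9) :=
        mul_nonneg (by linarith) hf9
      nlinarith [key, hcomb]
    · rw [if_neg hlt]
      push_neg at hlt
      rw [hrhs, div_le_div_iff₀ (by norm_num) (by linarith)]
      nlinarith [sq_nonneg (α-2), sq_nonneg α]
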